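/- Let β ∈ (0,1/2], o = (0,0,…,1,0) ∈ S^N ⊂ R^{N+1}, and define σ̃(θ) = arccos^β( (∏_{i=1}^{N−1} sin θ_i) cos θ_N ) for θ ∈ Θ = [0,π]^{N−1} × [0,2π). Let θ₀ = (π/2,…,π/2,π) ∈ Θ. Then σ̃(θ) = π^β − β π^{β−1} ‖θ − θ₀‖ (1 + o(1)) as ‖θ − θ₀‖ → 0. -/

import Mathlib

open Filter Set Real Topology

noncomputable section

private lemma prod_bounds' {ι : Type*} (s : Finset ι) (c : ι → ℝ)
    (h0 : ∀ i ∈ s, 0 ≤ c i) (h1 : ∀ i ∈ s, c i ≤ 1) :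
    1 - ∏ i ∈ s, c i ≤ ∑ i ∈ s, (1 - c i) ∧
    ∑ i ∈ s, (1 - c i) - (∑ i ∈ s, (1 - c i))^2 ≤ 1 - ∏ i ∈ s, c i := by
  induction s using Finset.cons_induction with
  | empty => simp
  | cons a s ha ih =>
    have h0a := h0 a (Finset.mem_cons_self a s)
    have h1a := h1 a (Finset.mem_cons_self a s)
    have h0' : ∀ i ∈ s, 0 ≤ c i := fun i hi => h0 i (Finset.mem_cons_of_mem hi)
    have h1' : ∀ i ∈ s, c i ≤ 1 := fun i hi => h1 i (Finset.mem_cons_of_mem hi)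
    obtain ⟨ih1, ih2⟩ := ih h0' h1'
    have hP0 : 0 ≤ ∏ i ∈ s, c i := Finset.prod_nonneg h0'
    have hP1 : ∏ i ∈ s, c i ≤ 1 := Finset.prod_le_one h0' h1'
    have hS0 : 0 ≤ ∑ i ∈ s, (1 - c i) :=
      Finset.sum_nonneg fun i hi => by linarith [h1' i hi]
    rw [Finset.prod_cons, Finset.sum_cons]
    constructor
    · nlinarith
    · nlinarith

private lemma limA' {β : ℝ} (hβ : 0 < β) :
    Tendsto (fun a : ℝ => (π ^ β - (π - a) ^ β) / (β * π ^ (β - 1) * a))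
      (𝓝[>] (0:ℝ)) (𝓝 1) := by
  have hπ : (0:ℝ) < π := Real.pi_pos
  have hc : β * π ^ (β - 1) ≠ 0 :=
    ne_of_gt (mul_pos hβ (Real.rpow_pos_of_pos hπ _))
  have hd : HasDerivAt (fun x : ℝ => x ^ β) (β * π ^ (β - 1)) π := by
    simpa [mul_comm] using Real.hasDerivAt_rpow_const (x := π) (p := β) (Or.inl hπ.ne')
  have hslope := hasDerivAt_iff_tendsto_slope.mp hd
  have hmap : Tendsto (fun a : ℝ => π - a) (𝓝[>] (0:ℝ)) (𝓝[≠] π) := by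
    apply tendsto_nhdsWithin_of_tendsto_nhds_of_eventually_within
    · have h0 : Tendsto (fun a : ℝ => π - a) (𝓝 (0:ℝ)) (𝓝 (π - 0)) :=
        tendsto_const_nhds.sub tendsto_id
      rw [sub_zero] at h0
      exact h0.mono_left nhdsWithin_le_nhds
    · filter_upwards [self_mem_nhdsWithin] with a (ha : 0 < a)
      simp only [mem_compl_iff, mem_singleton_iff]
      intro h
      have : a = 0 := by linarith [sub_eq_self.mp (by linarith : π - a = π)]
      linarith
  have hcomp := (hslope.comp hmap).div_const (β * π ^ (β - 1))
  rw [div_self hc] at hcomp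
  apply hcomp.congr'
  filter_upwards [self_mem_nhdsWithin] with a (ha : 0 < a)
  simp only [Function.comp_apply, slope_def_field]
  have h1 : (π - a) - π = -a := by ring
  rw [h1, div_div]
  rw [div_eq_div_iff (mul_ne_zero (neg_ne_zero.mpr ha.ne') hc) (mul_ne_zero hc ha.ne')]
  ring

private lemma limBaux :
    Tendsto (fun t : ℝ => 2 * (1 - Real.cos t) / t ^ 2) (𝓝[>] (0:ℝ)) (𝓝 1) := by
  rw [Metric.tendsto_nhdsWithin_nhds]
  intro ε hε
  refine ⟨min 1 (Real.sqrt ε), lt_min one_pos (Real.sqrt_pos.mpr hε), ?_⟩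
  intro t (ht : 0 < t) hdist
  rw [Real.dist_eq, sub_zero] at hdist
  have habs : |t| = t := abs_of_pos ht
  have ht1 : t < 1 := lt_of_lt_of_le (habs ▸ hdist) (min_le_left _ _)
  have hts : t < Real.sqrt ε := lt_of_lt_of_le (habs ▸ hdist) (min_le_right _ _)
  have ht2 : t ^ 2 < ε := by
    calc t ^ 2 = t * t := sq t
      _ < Real.sqrt ε * Real.sqrt ε := by
          apply mul_lt_mul' hts.le hts ht.le (Real.sqrt_pos.mpr hε)
      _ = ε := Real.mul_self_sqrt hε.le
  have hb := Real.cos_bound (x := t) (by rw [habs]; linarith)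
  rw [habs] at hb
  rw [Real.dist_eq]
  have ht2' : (0:ℝ) < t ^ 2 := by positivity
  have key : |2 * (1 - Real.cos t) - t ^ 2| ≤ t ^ 4 * (5 / 48) := by
    have h0 : 2 * (1 - Real.cos t) - t ^ 2 = -(2 * (Real.cos t - (1 - t ^ 2 / 2))) := by ring
    rw [h0, abs_neg, abs_mul, abs_two]
    nlinarith [hb]
  have heq : |2 * (1 - Real.cos t) / t ^ 2 - 1| = |2 * (1 - Real.cos t) - t ^ 2| / t ^ 2 := by
    rw [show 2 * (1 - Real.cos t) / t ^ 2 - 1 = (2 * (1 - Real.cos t) - t ^ 2) / t ^ 2 by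
      field_simp]
    rw [abs_div, abs_of_pos ht2']
  rw [heq]
  calc |2 * (1 - Real.cos t) - t ^ 2| / t ^ 2 ≤ t ^ 4 * (5 / 48) / t ^ 2 :=
        (div_le_div_iff_of_pos_right ht2').mpr key
    _ = t ^ 2 * (5 / 48) := by field_simp
    _ < ε := by nlinarith

private lemma limB' :
    Tendsto (fun t : ℝ => t ^ 2 / (2 * (1 - Real.cos t))) (𝓝[>] (0:ℝ)) (𝓝 1) := by
  have h := limBaux.inv₀ one_ne_zero
  rw [inv_one] at h
  apply h.congr
  intro t
  rw [inv_div]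

set_option maxHeartbeats 2000000 in
/-- Lemma `lemA`, first part.  Under spherical coordinates
`x_N = (∏_{i=1}^{N-1} sin θᵢ) cos θ_N` and with the starting point `o = (0,…,1,0)`, the
standard deviation `σ̃(θ) = arccos^β((∏_{i=1}^{N-1} sin θᵢ) cos θ_N)` of the SFBM satisfies
`σ̃(θ) = π^β − β π^{β−1} ‖θ − θ₀‖ (1 + o(1))` as `‖θ − θ₀‖ → 0` within
`Θ = [0,π]^{N-1} × [0,2π)`, where `θ₀ = (π/2, …, π/2, π)`. -/
theorem sfbm_sd_expansion_sphere
    (N : ℕ) (hN : 1 ≤ N) (β : ℝ) (hβ : β ∈ Set.Ioc (0:ℝ) (1/2))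
    (σ : EuclideanSpace ℝ (Fin N) → ℝ)
    (hσ : ∀ θ, σ θ = Real.arccos
      ((∏ i : Fin N, if (i : ℕ) < N - 1 then Real.sin (θ i) else 1) *
        Real.cos (θ (⟨N - 1, by omega⟩ : Fin N))) ^ β)
    (θ0 : EuclideanSpace ℝ (Fin N))
    (hθ0 : ∀ i : Fin N, θ0 i = if (i : ℕ) = N - 1 then Real.pi else Real.pi / 2)
    (Θ : Set (EuclideanSpace ℝ (Fin N)))
    (hΘ : Θ = {θ | (∀ i : Fin N, (i : ℕ) < N - 1 → θ i ∈ Set.Icc 0 Real.pi) ∧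
      θ (⟨N - 1, by omega⟩ : Fin N) ∈ Set.Ico 0 (2 * Real.pi)}) :
    ∀ ε > (0:ℝ), ∃ δ > (0:ℝ), ∀ θ ∈ Θ, θ ≠ θ0 → ‖θ - θ0‖ < δ →
      |(Real.pi ^ β - σ θ) / (β * Real.pi ^ (β - 1) * ‖θ - θ0‖) - 1| ≤ ε := by
  obtain ⟨hβ0, hβ2⟩ := hβ
  have hπ : (0:ℝ) < π := Real.pi_pos
  have hlt : N - 1 < N := by omega
  set last : Fin N := ⟨N - 1, hlt⟩ with hlastdef
  have hne_iff : ∀ i : Fin N, ((i : ℕ) < N - 1 ↔ i ≠ last) := by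
    intro i
    have hi := i.isLt
    constructor
    · intro h hc
      rw [hc] at h
      exact lt_irrefl _ h
    · intro h
      have : (i : ℕ) ≠ N - 1 := fun hc => h (Fin.ext hc)
      omega
  have hθ0' : ∀ i : Fin N, i ≠ last → θ0 i = π / 2 := by
    intro i hi
    rw [hθ0 i, if_neg (fun hc => hi (Fin.ext hc))]
  have hθ0last : θ0 last = π := by
    rw [hθ0 last, if_pos rfl]
  set Q : EuclideanSpace ℝ (Fin N) → ℝ := fun θ => ∏ i, Real.cos (θ i - θ0 i) with hQdef
  -- product identity
  have hprod : ∀ θ : EuclideanSpace ℝ (Fin N),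
      ((∏ i : Fin N, if (i : ℕ) < N - 1 then Real.sin (θ i) else 1) * Real.cos (θ last))
        = - Q θ := by
    intro θ
    have h1 : ∀ i : Fin N, (if (i : ℕ) < N - 1 then Real.sin (θ i) else 1)
        = (if i = last then 1 else Real.cos (θ i - θ0 i)) := by
      intro i
      by_cases hi : i = last
      · rw [if_pos hi, if_neg (fun hc => ((hne_iff i).mp hc) hi)]
      · rw [if_pos ((hne_iff i).mpr hi), if_neg hi]
        rw [hθ0' i hi, show θ i - π/2 = -(π/2 - θ i) by ring, Real.cos_neg,
          Real.cos_pi_div_two_sub]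
    calc (∏ i : Fin N, if (i : ℕ) < N - 1 then Real.sin (θ i) else 1) * Real.cos (θ last)
        = (∏ i : Fin N, if i = last then 1 else Real.cos (θ i - θ0 i)) * Real.cos (θ last) := by
          rw [Finset.prod_congr rfl (fun i _ => h1 i)]
      _ = (∏ i ∈ Finset.univ.erase last, Real.cos (θ i - θ0 i)) * Real.cos (θ last) := by
          congr 1
          rw [← Finset.mul_prod_erase Finset.univ
            (fun i => if i = last then 1 else Real.cos (θ i - θ0 i)) (Finset.mem_univ last)]
          rw [if_pos rfl, one_mul]
          exact Finset.prod_congr rfl (fun i hi => if_neg (Finset.ne_of_mem_erase hi))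
      _ = - Q θ := by
          show _ = -(∏ i, Real.cos (θ i - θ0 i))
          rw [← Finset.mul_prod_erase Finset.univ
            (fun i => Real.cos (θ i - θ0 i)) (Finset.mem_univ last)]
          rw [hθ0last, show θ last - π = -(π - θ last) by ring, Real.cos_neg, Real.cos_pi_sub]
          ring
  have hσ2 : ∀ θ, σ θ = Real.arccos
      ((∏ i : Fin N, if (i : ℕ) < N - 1 then Real.sin (θ i) else 1) *
        Real.cos (θ last)) ^ β := hσ
  -- coordinate bounds
  have hcoord : ∀ (θ : EuclideanSpace ℝ (Fin N)) (i : Fin N), |θ i - θ0 i| ≤ ‖θ - θ0‖ := by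
    intro θ i
    rw [EuclideanSpace.norm_eq]
    have h2 : Real.sqrt (‖(θ - θ0) i‖ ^ 2) = |θ i - θ0 i| := by
      rw [Real.sqrt_sq_eq_abs, abs_norm, Real.norm_eq_abs]; rfl
    rw [← h2]
    apply Real.sqrt_le_sqrt
    exact Finset.single_le_sum (f := fun j => ‖(θ - θ0) j‖ ^ 2)
      (fun j _ => sq_nonneg _) (Finset.mem_univ i)
  have hnormsq : ∀ θ : EuclideanSpace ℝ (Fin N), ‖θ - θ0‖ ^ 2 = ∑ i, (θ i - θ0 i) ^ 2 := by
    intro θ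
    rw [EuclideanSpace.norm_eq, Real.sq_sqrt (Finset.sum_nonneg fun i _ => sq_nonneg _)]
    exact Finset.sum_congr rfl fun i _ => by rw [Real.norm_eq_abs, sq_abs]; rfl
  set L := 𝓝[≠] θ0 with hLdef
  have hsmall : ∀ᶠ θ in L, ‖θ - θ0‖ < 1 ∧ θ ≠ θ0 := by
    have h1 : ∀ᶠ θ in 𝓝 θ0, ‖θ - θ0‖ < 1 := by
      filter_upwards [Metric.ball_mem_nhds θ0 one_pos] with θ hθ
      rw [← dist_eq_norm]
      exact Metric.mem_ball.mp hθ
    filter_upwards [h1.filter_mono nhdsWithin_le_nhds, self_mem_nhdsWithin] with θ h hne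
    exact ⟨h, hne⟩
  have hkey : ∀ᶠ θ in L, 0 < Q θ ∧ Q θ < 1 := by
    filter_upwards [hsmall] with θ hpair
    obtain ⟨hr, hne⟩ := hpair
    have hwi : ∀ i, |θ i - θ0 i| < 1 := fun i => lt_of_le_of_lt (hcoord θ i) hr
    have hcospos : ∀ i, 0 < Real.cos (θ i - θ0 i) := by
      intro i
      apply Real.cos_pos_of_mem_Ioo
      obtain ⟨ha, hb⟩ := abs_lt.mp (hwi i)
      constructor
      · simp only [mem_Ioo] at *
        nlinarith [Real.pi_gt_three]
      · nlinarith [Real.pi_gt_three]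
    have hcosle : ∀ i, Real.cos (θ i - θ0 i) ≤ 1 := fun i => Real.cos_le_one _
    refine ⟨Finset.prod_pos fun i _ => hcospos i, ?_⟩
    have hrpos : 0 < ‖θ - θ0‖ := norm_pos_iff.mpr (sub_ne_zero.mpr hne)
    have hsum : 0 < ∑ i, (θ i - θ0 i) ^ 2 := by
      rw [← hnormsq θ]
      exact pow_pos hrpos 2
    have hex : ∃ j, θ j - θ0 j ≠ 0 := by
      by_contra h
      push_neg at h
      have h0 : ∑ i, (θ i - θ0 i) ^ 2 = 0 :=
        Finset.sum_eq_zero fun i _ => by rw [h i]; ring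
      linarith
    obtain ⟨j, hj⟩ := hex
    have hcj : Real.cos (θ j - θ0 j) < 1 := by
      have hb := Real.cos_bound (x := θ j - θ0 j) (hwi j).le
      have habs := abs_le.mp hb
      have h1 : |θ j - θ0 j| ^ 4 = ((θ j - θ0 j) ^ 2) ^ 2 := by
        rw [show |θ j - θ0 j| ^ 4 = (|θ j - θ0 j| ^ 2) ^ 2 by ring, sq_abs]
      have hx2pos : 0 < (θ j - θ0 j) ^ 2 :=
        lt_of_le_of_ne (sq_nonneg _) (Ne.symm (pow_ne_zero 2 hj))
      have hle1 : (θ j - θ0 j) ^ 2 ≤ 1 := by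
        nlinarith [sq_abs (θ j - θ0 j), (hwi j).le, abs_nonneg (θ j - θ0 j)]
      nlinarith [habs.2, h1, hle1, hx2pos, sq_nonneg ((θ j - θ0 j) ^ 2)]
    calc Q θ = Real.cos (θ j - θ0 j) * ∏ i ∈ Finset.univ.erase j, Real.cos (θ i - θ0 i) :=
        (Finset.mul_prod_erase _ _ (Finset.mem_univ j)).symm
      _ ≤ Real.cos (θ j - θ0 j) * 1 := by
          apply mul_le_mul_of_nonneg_left _ (hcospos j).le
          exact Finset.prod_le_one (fun i _ => (hcospos i).le) (fun i _ => hcosle i)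
      _ < 1 := by rw [mul_one]; exact hcj
  -- continuity of Q and limit of arccos ∘ Q
  have hQc : Continuous Q := by
    rw [hQdef]
    apply continuous_finset_prod
    intro i _
    exact Real.continuous_cos.comp (((EuclideanSpace.proj i).continuous).sub continuous_const)
  have hQt : Tendsto Q L (𝓝 1) := by
    have h1 : Tendsto Q (𝓝 θ0) (𝓝 (Q θ0)) := hQc.tendsto θ0
    have h2 : Q θ0 = 1 := by
      rw [hQdef]
      simp
    rw [h2] at h1
    exact h1.mono_left nhdsWithin_le_nhds
  have hat : Tendsto (fun θ => Real.arccos (Q θ)) L (𝓝[>] (0:ℝ)) := by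
    apply tendsto_nhdsWithin_of_tendsto_nhds_of_eventually_within
    · have h1 := (Real.continuous_arccos.tendsto 1).comp hQt
      rwa [Real.arccos_one] at h1
    · filter_upwards [hkey] with θ hk
      exact Real.arccos_pos.mpr hk.2
  -- the multivariate estimate
  have h3 : Tendsto (fun θ => 2 * (1 - Q θ) / ‖θ - θ0‖ ^ 2) L (𝓝 1) := by
    rw [hLdef, Metric.tendsto_nhdsWithin_nhds]
    intro ε hε
    have hε6 : (0:ℝ) < ε / 6 := by linarith
    refine ⟨min 1 (Real.sqrt (ε / 6)), lt_min one_pos (Real.sqrt_pos.mpr hε6), ?_⟩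
    intro θ hmem hdist
    simp only [Set.mem_compl_iff, Set.mem_singleton_iff] at hmem
    rw [dist_eq_norm] at hdist
    set δ := min 1 (Real.sqrt (ε / 6)) with hδdef
    set r := ‖θ - θ0‖ with hrdef
    have hδpos : 0 < δ := lt_min one_pos (Real.sqrt_pos.mpr hε6)
    have hδ1 : δ ≤ 1 := min_le_left _ _
    have hδε : δ ^ 2 ≤ ε / 6 := by
      have h1 : δ ≤ Real.sqrt (ε / 6) := min_le_right _ _
      nlinarith [Real.sq_sqrt hε6.le, Real.sqrt_nonneg (ε / 6), hδpos.le]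
    have hrpos : 0 < r := norm_pos_iff.mpr (sub_ne_zero.mpr hmem)
    have hr2pos : 0 < r ^ 2 := pow_pos hrpos 2
    have hrδ : r < δ := hdist
    have hw : ∀ i, |θ i - θ0 i| < δ := fun i => lt_of_le_of_lt (hcoord θ i) hrδ
    -- per coordinate
    have hper : ∀ i : Fin N,
        |2 * (1 - Real.cos (θ i - θ0 i)) - (θ i - θ0 i) ^ 2| ≤ δ ^ 2 * (θ i - θ0 i) ^ 2 := by
      intro i
      have hwile := (hw i).le
      have hδpos' := hδpos.le
      set x := θ i - θ0 i with hxdef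
      clear_value x
      clear hw hkey hsmall hat hQt hQc hprod hσ2 hσ hθ0 hΘ hcoord hnormsq
      have hx1 : |x| ≤ 1 := le_trans hwile hδ1
      have hb := Real.cos_bound hx1
      have habs := abs_le.mp hb
      have h1 : |x| ^ 4 = x ^ 2 * x ^ 2 := by
        rw [show |x| ^ 4 = |x| ^ 2 * |x| ^ 2 by ring, sq_abs]
      have hx2 : x ^ 2 ≤ δ ^ 2 := by
        rw [← sq_abs x]
        exact pow_le_pow_left₀ (abs_nonneg x) hwile 2
      have h2 : x ^ 2 * x ^ 2 * (5 / 48) ≤ δ ^ 2 * x ^ 2 := by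
        have h3 := mul_le_mul_of_nonneg_right hx2 (sq_nonneg x)
        have h4 : (0:ℝ) ≤ x ^ 2 * x ^ 2 := mul_nonneg (sq_nonneg x) (sq_nonneg x)
        linarith
      rw [abs_le]
      constructor
      · linarith [habs.1, h1.ge, h1.le, h2,
          mul_le_mul_of_nonneg_right (le_of_eq h1) (by norm_num : (0:ℝ) ≤ 5 / 96),
          mul_le_mul_of_nonneg_right (le_of_eq h1.symm) (by norm_num : (0:ℝ) ≤ 5 / 96)]
      · linarith [habs.2, h2,
          mul_le_mul_of_nonneg_right (le_of_eq h1) (by norm_num : (0:ℝ) ≤ 5 / 96),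
          mul_le_mul_of_nonneg_right (le_of_eq h1.symm) (by norm_num : (0:ℝ) ≤ 5 / 96)]
    -- sums
    have hr2 : r ^ 2 = ∑ i, (θ i - θ0 i) ^ 2 := hnormsq θ
    have hsum1 : |2 * (∑ i, (1 - Real.cos (θ i - θ0 i))) - r ^ 2| ≤ δ ^ 2 * r ^ 2 := by
      have h1 : 2 * (∑ i, (1 - Real.cos (θ i - θ0 i))) - r ^ 2
          = ∑ i, (2 * (1 - Real.cos (θ i - θ0 i)) - (θ i - θ0 i) ^ 2) := by
        rw [hr2, Finset.mul_sum, ← Finset.sum_sub_distrib]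
      rw [h1]
      calc |∑ i, (2 * (1 - Real.cos (θ i - θ0 i)) - (θ i - θ0 i) ^ 2)|
          ≤ ∑ i, |2 * (1 - Real.cos (θ i - θ0 i)) - (θ i - θ0 i) ^ 2| :=
            Finset.abs_sum_le_sum_abs _ _
        _ ≤ ∑ i, δ ^ 2 * (θ i - θ0 i) ^ 2 := Finset.sum_le_sum fun i _ => hper i
        _ = δ ^ 2 * r ^ 2 := by rw [hr2, Finset.mul_sum]
    have hs0 : 0 ≤ ∑ i, (1 - Real.cos (θ i - θ0 i)) :=
      Finset.sum_nonneg fun i _ => sub_nonneg.mpr (Real.cos_le_one _)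
    have hsle : ∑ i, (1 - Real.cos (θ i - θ0 i)) ≤ r ^ 2 := by
      obtain ⟨hA, hB⟩ := abs_le.mp hsum1
      have hδsq : δ ^ 2 ≤ 1 := by nlinarith [hδpos.le, hδ1]
      nlinarith [hr2pos.le]
    -- product bounds
    have hcos0 : ∀ i : Fin N, 0 ≤ Real.cos (θ i - θ0 i) := by
      intro i
      have hx1 : |θ i - θ0 i| < 1 := lt_of_lt_of_le (hw i) hδ1
      apply le_of_lt
      apply Real.cos_pos_of_mem_Ioo
      obtain ⟨ha, hb⟩ := abs_lt.mp hx1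
      constructor
      · nlinarith [Real.pi_gt_three]
      · nlinarith [Real.pi_gt_three]
    have hpb := prod_bounds' Finset.univ (fun i => Real.cos (θ i - θ0 i))
      (fun i _ => hcos0 i) (fun i _ => Real.cos_le_one _)
    have hpb1 : 1 - ∏ i, Real.cos (θ i - θ0 i) ≤ ∑ i, (1 - Real.cos (θ i - θ0 i)) := hpb.1
    have hpb2 : (∑ i, (1 - Real.cos (θ i - θ0 i))) - (∑ i, (1 - Real.cos (θ i - θ0 i))) ^ 2
        ≤ 1 - ∏ i, Real.cos (θ i - θ0 i) := hpb.2
    have e1 : Q θ = ∏ i, Real.cos (θ i - θ0 i) := by rw [hQdef]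
    have hfinal : |2 * (1 - Q θ) - r ^ 2| ≤ 3 * δ ^ 2 * r ^ 2 := by
      have h1 : |2 * (1 - Q θ) - 2 * (∑ i, (1 - Real.cos (θ i - θ0 i)))|
          ≤ 2 * (∑ i, (1 - Real.cos (θ i - θ0 i))) ^ 2 := by
        rw [e1, abs_le]
        constructor
        · nlinarith [hpb1, hs0]
        · nlinarith [hpb2, hs0]
      have hrδ2 : r ^ 2 ≤ δ ^ 2 := by nlinarith [hrpos.le, hδpos.le]
      have h2 : 2 * (∑ i, (1 - Real.cos (θ i - θ0 i))) ^ 2 ≤ 2 * δ ^ 2 * r ^ 2 := by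
        nlinarith [hs0, hsle, hr2pos.le]
      have ha := abs_le.mp h1
      have hb := abs_le.mp hsum1
      rw [abs_le]
      constructor
      · nlinarith
      · nlinarith
    rw [Real.dist_eq]
    have heq : |2 * (1 - Q θ) / r ^ 2 - 1| = |2 * (1 - Q θ) - r ^ 2| / r ^ 2 := by
      rw [show 2 * (1 - Q θ) / r ^ 2 - 1 = (2 * (1 - Q θ) - r ^ 2) / r ^ 2 by
        field_simp]
      rw [abs_div, abs_of_pos hr2pos]
    rw [heq]
    calc |2 * (1 - Q θ) - r ^ 2| / r ^ 2 ≤ 3 * δ ^ 2 * r ^ 2 / r ^ 2 :=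
          (div_le_div_iff_of_pos_right hr2pos).mpr hfinal
      _ = 3 * δ ^ 2 := by field_simp
      _ ≤ ε / 2 := by nlinarith
      _ < ε := by linarith
  -- a² / (2(1-Q)) → 1
  have h2' : Tendsto (fun θ => (Real.arccos (Q θ)) ^ 2 / (2 * (1 - Q θ))) L (𝓝 1) := by
    have hcomp := limB'.comp hat
    apply hcomp.congr'
    filter_upwards [hkey] with θ hk
    simp only [Function.comp_apply]
    rw [Real.cos_arccos (by linarith [hk.1]) hk.2.le]
  -- (a/r)² → 1
  have h4 : Tendsto (fun θ => (Real.arccos (Q θ) / ‖θ - θ0‖) ^ 2) L (𝓝 1) := by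
    have hmul := h2'.mul h3
    rw [mul_one] at hmul
    apply hmul.congr'
    filter_upwards [hkey, self_mem_nhdsWithin] with θ hk hne
    have hne' : θ ≠ θ0 := hne
    have hrpos : 0 < ‖θ - θ0‖ := norm_pos_iff.mpr (sub_ne_zero.mpr hne')
    have h2Q : (2 : ℝ) * (1 - Q θ) ≠ 0 := by
      have := hk.2
      intro hcon
      nlinarith
    rw [div_pow, div_mul_div_comm,
      show Real.arccos (Q θ) ^ 2 * (2 * (1 - Q θ)) = (2 * (1 - Q θ)) * Real.arccos (Q θ) ^ 2
        by ring,
      show 2 * (1 - Q θ) * ‖θ - θ0‖ ^ 2 = (2 * (1 - Q θ)) * ‖θ - θ0‖ ^ 2 by ring,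
      mul_div_mul_left _ _ h2Q]
  -- a/r → 1
  have h5 : Tendsto (fun θ => Real.arccos (Q θ) / ‖θ - θ0‖) L (𝓝 1) := by
    have hsq := (Real.continuous_sqrt.tendsto 1).comp h4
    rw [Real.sqrt_one] at hsq
    apply hsq.congr'
    filter_upwards [self_mem_nhdsWithin] with θ hne
    simp only [Function.comp_apply]
    exact Real.sqrt_sq (div_nonneg (Real.arccos_nonneg _) (norm_nonneg _))
  -- difference quotient → 1
  have h6 := (limA' hβ0).comp hat
  -- the main limit
  have T : Tendsto (fun θ => (π ^ β - σ θ) / (β * π ^ (β - 1) * ‖θ - θ0‖)) L (𝓝 1) := by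
    have hmul := h6.mul h5
    rw [mul_one] at hmul
    apply hmul.congr'
    filter_upwards [hkey, self_mem_nhdsWithin] with θ hk hne
    have hne' : θ ≠ θ0 := hne
    have hrpos : 0 < ‖θ - θ0‖ := norm_pos_iff.mpr (sub_ne_zero.mpr hne')
    have hapos : 0 < Real.arccos (Q θ) := Real.arccos_pos.mpr hk.2
    simp only [Function.comp_apply]
    rw [hσ2 θ, hprod θ, Real.arccos_neg]
    rw [div_mul_div_comm]
    rw [show (π ^ β - (π - Real.arccos (Q θ)) ^ β) * Real.arccos (Q θ)
          = Real.arccos (Q θ) * (π ^ β - (π - Real.arccos (Q θ)) ^ β) by ring,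
        show β * π ^ (β - 1) * Real.arccos (Q θ) * ‖θ - θ0‖
          = Real.arccos (Q θ) * (β * π ^ (β - 1) * ‖θ - θ0‖) by ring,
        mul_div_mul_left _ _ hapos.ne']
  -- extract ε-δ
  intro ε hε
  rw [hLdef, Metric.tendsto_nhdsWithin_nhds] at T
  obtain ⟨δ, hδpos, H⟩ := T ε hε
  refine ⟨δ, hδpos, ?_⟩
  intro θ _ hne hr
  have h1 := H (Set.mem_compl_singleton_iff.mpr hne) (by rw [dist_eq_norm]; exact hr)
  rw [Real.dist_eq] at h1
  exact h1.le


end
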